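/- Let Λ₀, Λ₁, Λ₂, Λ₃ be real numbers with Λ₀ > Λ₁ > 0 and Λ₂ < 0, Λ₃ < 0, and define Q(p) = Λ₀ p₀² − Λ₁ p₁² − Λ₂ p₂² − Λ₃ p₃² on ℝ⁴. Let m ∈ ℝ⁴ satisfy m₀ > 0 and m₀² > m₁² + m₂² + m₃². Then the bottom of the valley, B = {r ∈ ℝ⁴ : r₀ > 0, r₀² = r₁² + r₂² + r₃², Q(r − m) < 0}, has exactly two connected components, and each component is simply connected. -/

import Mathlib

set_option maxHeartbeats 1000000

open Set

namespace Stmt16Aux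

noncomputable section

/-- `-Q`, the negated quartic eigenform; `Q p < 0 ↔ 0 < qf p`. -/
def qf (L0 L1 l2 l3 : ℝ) (p : Fin 4 → ℝ) : ℝ :=
  L1 * (p 1)^2 - L0 * (p 0)^2 - l2 * (p 2)^2 - l3 * (p 3)^2

def av (p : Fin 4 → ℝ) : ℝ := (p 1)^2 + (p 2)^2 + (p 3)^2 - (p 0)^2

def bv (m p : Fin 4 → ℝ) : ℝ := m 1 * p 1 + m 2 * p 2 + m 3 * p 3 - m 0 * p 0

def cv (m : Fin 4 → ℝ) : ℝ := (m 1)^2 + (m 2)^2 + (m 3)^2 - (m 0)^2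

/-- Exit time of the ray `m + t•p` through the forward light-cone surface. -/
def Tf (m p : Fin 4 → ℝ) : ℝ :=
  (-(bv m p) + Real.sqrt ((bv m p)^2 - av p * cv m)) / av p

/-- Exit point of the ray `m + t•p` on the light-cone surface. -/
def Gf (m p : Fin 4 → ℝ) : Fin 4 → ℝ := fun i => m i + Tf m p * p i

/-- One convex half of the open cone `{Q < 0}` (sign `ε = ±1`). -/
def Cset (L0 L1 l2 l3 ε : ℝ) : Set (Fin 4 → ℝ) :=
  {p | 0 < qf L0 L1 l2 l3 p ∧ 0 < ε * p 1}

/-- One of the two pieces of the bottom of the valley. -/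
def Bset (L0 L1 l2 l3 ε : ℝ) (m : Fin 4 → ℝ) : Set (Fin 4 → ℝ) :=
  {y | 0 < y 0 ∧ (y 0)^2 = (y 1)^2 + (y 2)^2 + (y 3)^2 ∧
    0 < qf L0 L1 l2 l3 (y - m) ∧ 0 < ε * (y 1 - m 1)}

def x1s (m : Fin 4 → ℝ) : ℝ := Real.sqrt ((m 0)^2 - (m 2)^2 - (m 3)^2)

/-- The chosen base point of `Bset ε`. -/
def rstar (ε : ℝ) (m : Fin 4 → ℝ) : Fin 4 → ℝ :=
  fun i => if i = 1 then ε * x1s m else m i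

section lemmas

variable {L0 L1 l2 l3 ε : ℝ} {m : Fin 4 → ℝ}

lemma p1sq (hL1 : 0 < L1) (hL01 : L1 < L0) (hl2 : 0 < l2) (hl3 : 0 < l3)
    {p : Fin 4 → ℝ} (hp : 0 < qf L0 L1 l2 l3 p) : (p 0)^2 < (p 1)^2 := by
  unfold qf at hp
  nlinarith [sq_nonneg (p 0), sq_nonneg (p 2), sq_nonneg (p 3),
    mul_nonneg hl2.le (sq_nonneg (p 2)), mul_nonneg hl3.le (sq_nonneg (p 3))]

lemma av_pos (hL1 : 0 < L1) (hL01 : L1 < L0) (hl2 : 0 < l2) (hl3 : 0 < l3)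
    {p : Fin 4 → ℝ} (hp : 0 < qf L0 L1 l2 l3 p) : 0 < av p := by
  have := p1sq hL1 hL01 hl2 hl3 hp
  unfold av
  nlinarith [sq_nonneg (p 2), sq_nonneg (p 3)]

lemma cv_neg (hm : (m 1)^2 + (m 2)^2 + (m 3)^2 < (m 0)^2) : cv m < 0 := by
  unfold cv; linarith

lemma disc_pos (hm : (m 1)^2 + (m 2)^2 + (m 3)^2 < (m 0)^2)
    {p : Fin 4 → ℝ} (hav : 0 < av p) : 0 < (bv m p)^2 - av p * cv m := by
  have hcv := cv_neg hm
  nlinarith [sq_nonneg (bv m p), mul_pos hav (neg_pos.2 hcv)]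

lemma Tf_pos (hm : (m 1)^2 + (m 2)^2 + (m 3)^2 < (m 0)^2)
    {p : Fin 4 → ℝ} (hav : 0 < av p) : 0 < Tf m p := by
  have hd := disc_pos hm hav
  have hs0 : 0 ≤ Real.sqrt ((bv m p)^2 - av p * cv m) := Real.sqrt_nonneg _
  have hs2 : (Real.sqrt ((bv m p)^2 - av p * cv m))^2 = (bv m p)^2 - av p * cv m :=
    Real.sq_sqrt hd.le
  have hcv := cv_neg hm
  apply div_pos _ hav
  nlinarith [mul_pos hav (neg_pos.2 hcv)]

lemma quad_root (hm : (m 1)^2 + (m 2)^2 + (m 3)^2 < (m 0)^2)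
    {p : Fin 4 → ℝ} (hav : 0 < av p) :
    av p * (Tf m p)^2 + 2 * bv m p * Tf m p + cv m = 0 := by
  have hd := disc_pos hm hav
  have hs2 : (Real.sqrt ((bv m p)^2 - av p * cv m))^2 = (bv m p)^2 - av p * cv m :=
    Real.sq_sqrt hd.le
  have hT : av p * Tf m p = -(bv m p) + Real.sqrt ((bv m p)^2 - av p * cv m) := by
    unfold Tf; field_simp
  have key : av p * (av p * (Tf m p)^2 + 2 * bv m p * Tf m p + cv m) = 0 := by
    have expand : av p * (av p * (Tf m p)^2 + 2 * bv m p * Tf m p + cv m)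
        = (av p * Tf m p)^2 + 2 * bv m p * (av p * Tf m p) + av p * cv m := by ring
    rw [expand, hT]
    linear_combination hs2
  exact (mul_eq_zero.1 key).resolve_left hav.ne'

lemma Tf_eq_one (hm : (m 1)^2 + (m 2)^2 + (m 3)^2 < (m 0)^2)
    {p : Fin 4 → ℝ} (hav : 0 < av p)
    (hsum : av p + 2 * bv m p + cv m = 0) : Tf m p = 1 := by
  have hcv := cv_neg hm
  have key : (bv m p)^2 - av p * cv m = (av p + bv m p)^2 := by
    linear_combination (-(av p)) * hsum
  have hab : 0 < av p + bv m p := by nlinarith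
  unfold Tf
  rw [key, Real.sqrt_sq hab.le]
  field_simp
  ring

lemma sub_mem_Cset {y : Fin 4 → ℝ} (hy : y ∈ Bset L0 L1 l2 l3 ε m) :
    y - m ∈ Cset L0 L1 l2 l3 ε := by
  refine ⟨hy.2.2.1, ?_⟩
  simpa [Pi.sub_apply] using hy.2.2.2

lemma Gf_sub_eq (hm : (m 1)^2 + (m 2)^2 + (m 3)^2 < (m 0)^2)
    (hL1 : 0 < L1) (hL01 : L1 < L0) (hl2 : 0 < l2) (hl3 : 0 < l3)
    {y : Fin 4 → ℝ} (hy : y ∈ Bset L0 L1 l2 l3 ε m) : Gf m (y - m) = y := by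
  have hav : 0 < av (y - m) := av_pos hL1 hL01 hl2 hl3 hy.2.2.1
  have hsum : av (y - m) + 2 * bv m (y - m) + cv m = 0 := by
    have hc := hy.2.1
    unfold av bv cv
    simp only [Pi.sub_apply]
    linear_combination -hc
  have hT1 : Tf m (y - m) = 1 := Tf_eq_one hm hav hsum
  funext i
  simp only [Gf, hT1, Pi.sub_apply]
  ring

lemma Gf_mem (hL1 : 0 < L1) (hL01 : L1 < L0) (hl2 : 0 < l2) (hl3 : 0 < l3)
    (hm0 : 0 < m 0) (hm : (m 1)^2 + (m 2)^2 + (m 3)^2 < (m 0)^2)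
    {p : Fin 4 → ℝ} (hp : p ∈ Cset L0 L1 l2 l3 ε) :
    Gf m p ∈ Bset L0 L1 l2 l3 ε m := by
  obtain ⟨hq, hsgn⟩ := hp
  have hav : 0 < av p := av_pos hL1 hL01 hl2 hl3 hq
  have hT : 0 < Tf m p := Tf_pos hm hav
  set T := Tf m p with hTdef
  have hquad : av p * T^2 + 2 * bv m p * T + cv m = 0 := quad_root hm hav
  have hcone : (m 0 + T * p 0)^2
      = (m 1 + T * p 1)^2 + (m 2 + T * p 2)^2 + (m 3 + T * p 3)^2 := by
    unfold av bv cv at hquad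
    linear_combination -hquad
  have hp1 : (p 0)^2 < (p 1)^2 := p1sq hL1 hL01 hl2 hl3 hq
  have h0 : 0 < m 0 + T * p 0 := by
    by_contra hcon
    push_neg at hcon
    set y1 := m 1 + T * p 1 with hy1
    set y2 := m 2 + T * p 2 with hy2
    set y3 := m 3 + T * p 3 with hy3
    set Sy := y1^2 + y2^2 + y3^2 with hSydef
    set Sp := (p 1)^2 + (p 2)^2 + (p 3)^2 with hSpdef
    have hSy0 : 0 ≤ Sy := by positivity
    have hSp0 : 0 ≤ Sp := by positivity
    set u := Real.sqrt Sy with hudef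
    set v := Real.sqrt Sp with hvdef
    have hu0 : 0 ≤ u := Real.sqrt_nonneg _
    have hv0 : 0 ≤ v := Real.sqrt_nonneg _
    have hu2 : u^2 = Sy := Real.sq_sqrt hSy0
    have hv2 : v^2 = Sp := Real.sq_sqrt hSp0
    -- m 0 + T * p 0 = -u
    have hy0 : m 0 + T * p 0 = -u := by
      have habs : u = |m 0 + T * p 0| := by
        rw [hudef, ← hcone, Real.sqrt_sq_eq_abs]
      rw [habs, abs_of_nonpos hcon]; ring
    -- Cauchy-Schwarz
    have hCS : (y1 * p 1 + y2 * p 2 + y3 * p 3)^2 ≤ Sy * Sp := by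
      rw [hSydef, hSpdef]
      nlinarith [sq_nonneg (y1 * p 2 - y2 * p 1), sq_nonneg (y1 * p 3 - y3 * p 1),
        sq_nonneg (y2 * p 3 - y3 * p 2)]
    have hip : y1 * p 1 + y2 * p 2 + y3 * p 3 ≤ u * v := by
      have h1 : |y1 * p 1 + y2 * p 2 + y3 * p 3| ≤ u * v := by
        rw [← Real.sqrt_sq_eq_abs]
        have h2 : Real.sqrt ((y1 * p 1 + y2 * p 2 + y3 * p 3)^2) ≤ Real.sqrt (Sy * Sp) :=
          Real.sqrt_le_sqrt hCS
        rwa [Real.sqrt_mul hSy0, ← hudef, ← hvdef] at h2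
      exact le_trans (le_abs_self _) h1
    have hpv : 0 < p 0 + v := by nlinarith [hv2, hv0, hp1]
    -- lower bound on |m⃗|²
    have h2 : u^2 - 2 * T * (u * v) + T^2 * v^2 ≤ (m 1)^2 + (m 2)^2 + (m 3)^2 := by
      have hh := mul_le_mul_of_nonneg_left hip (by positivity : (0:ℝ) ≤ 2 * T)
      have hexp : (m 1)^2 + (m 2)^2 + (m 3)^2
          = u^2 - 2 * T * (y1 * p 1 + y2 * p 2 + y3 * p 3) + T^2 * v^2 := by
        rw [hu2, hv2, hSydef, hSpdef, hy1, hy2, hy3]; ring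
      linarith [hh, hexp]
    have hm0sq : (m 0)^2 = (u + T * p 0)^2 := by
      have : m 0 = -u - T * p 0 := by linarith
      rw [this]; ring
    have hkey : u^2 - 2 * T * (u * v) + T^2 * v^2 < (u + T * p 0)^2 := by
      rw [← hm0sq]; linarith
    have hkey2 : 0 < T * ((p 0 + v) * (2 * u + T * (p 0 - v))) := by
      have hid : T * ((p 0 + v) * (2 * u + T * (p 0 - v)))
          = (u + T * p 0)^2 - (u^2 - 2 * T * (u * v) + T^2 * v^2) := by ring
      rw [hid]; linarith
    have h3 : 0 < (p 0 + v) * (2 * u + T * (p 0 - v)) := by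
      rcases mul_pos_iff.1 hkey2 with ⟨_, h⟩ | ⟨h, _⟩
      · exact h
      · linarith
    have h4 : 0 < 2 * u + T * (p 0 - v) := by
      rcases mul_pos_iff.1 h3 with ⟨_, h⟩ | ⟨h, _⟩
      · exact h
      · linarith
    linarith [h4, hy0, mul_pos hT hpv, hm0]
  refine ⟨h0, ?_, ?_, ?_⟩
  · show (m 0 + T * p 0)^2 = _
    exact hcone
  · have hsub : Gf m p - m = fun i => T * p i := by
      funext i; simp only [Pi.sub_apply, Gf, ← hTdef]; ring
    have hqf : qf L0 L1 l2 l3 (fun i => T * p i) = T^2 * qf L0 L1 l2 l3 p := by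
      simp only [qf]; ring
    rw [hsub, hqf]
    exact mul_pos (by positivity) hq
  · show 0 < ε * (m 1 + T * p 1 - m 1)
    have : ε * (m 1 + T * p 1 - m 1) = T * (ε * p 1) := by ring
    rw [this]
    exact mul_pos hT hsgn

lemma Cset_convex (hL1 : 0 < L1) (hL01 : L1 < L0) (hl2 : 0 < l2) (hl3 : 0 < l3)
    (hε : ε = 1 ∨ ε = -1)
    {p q : Fin 4 → ℝ} (hp : p ∈ Cset L0 L1 l2 l3 ε) (hq : q ∈ Cset L0 L1 l2 l3 ε)
    {t : ℝ} (ht0 : 0 ≤ t) (ht1 : t ≤ 1) :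
    (fun i => (1 - t) * p i + t * q i) ∈ Cset L0 L1 l2 l3 ε := by
  obtain ⟨hpq, hps⟩ := hp
  obtain ⟨hqq, hqs⟩ := hq
  have hL0 : 0 < L0 := lt_trans hL1 hL01
  have hp1q1 : 0 < p 1 * q 1 := by
    rcases hε with rfl | rfl <;> nlinarith [mul_pos hps hqs]
  set np := L0 * (p 0)^2 + l2 * (p 2)^2 + l3 * (p 3)^2 with hnp
  set nq := L0 * (q 0)^2 + l2 * (q 2)^2 + l3 * (q 3)^2 with hnq
  set cr := L0 * (p 0 * q 0) + l2 * (p 2 * q 2) + l3 * (p 3 * q 3) with hcr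
  set w := L1 * (p 1 * q 1) with hw
  have hNp0 : 0 ≤ np :=
    add_nonneg (add_nonneg (mul_nonneg hL0.le (sq_nonneg _))
      (mul_nonneg hl2.le (sq_nonneg _))) (mul_nonneg hl3.le (sq_nonneg _))
  have hNq0 : 0 ≤ nq :=
    add_nonneg (add_nonneg (mul_nonneg hL0.le (sq_nonneg _))
      (mul_nonneg hl2.le (sq_nonneg _))) (mul_nonneg hl3.le (sq_nonneg _))
  have h1 : np < L1 * (p 1)^2 := by
    have : qf L0 L1 l2 l3 p = L1 * (p 1)^2 - np := by rw [hnp]; unfold qf; ring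
    rw [this] at hpq; linarith
  have h2 : nq < L1 * (q 1)^2 := by
    have : qf L0 L1 l2 l3 q = L1 * (q 1)^2 - nq := by rw [hnq]; unfold qf; ring
    rw [this] at hqq; linarith
  have hCS : cr^2 ≤ np * nq := by
    rw [hcr, hnp, hnq]
    nlinarith [mul_nonneg (mul_pos hL0 hl2).le (sq_nonneg (p 0 * q 2 - p 2 * q 0)),
      mul_nonneg (mul_pos hL0 hl3).le (sq_nonneg (p 0 * q 3 - p 3 * q 0)),
      mul_nonneg (mul_pos hl2 hl3).le (sq_nonneg (p 2 * q 3 - p 3 * q 2))]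
  have hL1p : 0 < L1 * (p 1)^2 := lt_of_le_of_lt hNp0 h1
  have hprod : np * nq < w^2 := by
    calc np * nq < (L1 * (p 1)^2) * (L1 * (q 1)^2) := mul_lt_mul' h1.le h2 hNq0 hL1p
      _ = w^2 := by rw [hw]; ring
  have hwpos : 0 < w := mul_pos hL1 hp1q1
  have hC : 0 < w - cr := by nlinarith [hCS, hprod, hwpos]
  constructor
  · show 0 < qf L0 L1 l2 l3 _
    have hid : qf L0 L1 l2 l3 (fun i => (1 - t) * p i + t * q i)
        = (1 - t)^2 * qf L0 L1 l2 l3 p + t^2 * qf L0 L1 l2 l3 q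
          + 2 * t * (1 - t) * (w - cr) := by
      rw [hw, hcr]; unfold qf; ring
    rw [hid]
    have h1t : (0:ℝ) ≤ 1 - t := by linarith
    rcases le_total t (1/2) with h | h
    · nlinarith [mul_nonneg (sq_nonneg t) hqq.le,
        mul_nonneg (mul_nonneg ht0 h1t) hC.le,
        mul_nonneg (by nlinarith : (0:ℝ) ≤ (1 - t)^2 - 1/4) hpq.le, hpq]
    · nlinarith [mul_nonneg (sq_nonneg (1 - t)) hpq.le,
        mul_nonneg (mul_nonneg ht0 h1t) hC.le,
        mul_nonneg (by nlinarith : (0:ℝ) ≤ t^2 - 1/4) hqq.le, hqq]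
  · show 0 < ε * ((1 - t) * p 1 + t * q 1)
    have hexp : ε * ((1 - t) * p 1 + t * q 1) = (1 - t) * (ε * p 1) + t * (ε * q 1) := by ring
    rw [hexp]
    rcases eq_or_lt_of_le ht0 with h | h
    · rw [← h]; simpa using hps
    · have ha := mul_pos h hqs
      have hb := mul_nonneg (by linarith : (0:ℝ) ≤ 1 - t) hps.le
      linarith

lemma continuousOn_Gf : ContinuousOn (Gf m) {p | 0 < av p} := by
  have hav : Continuous av := by
    unfold av
    continuity
  have hbv : Continuous (bv m) := by
    unfold bv
    continuity
  have hnum : Continuous fun p => -(bv m p) + Real.sqrt ((bv m p)^2 - av p * cv m) := by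
    apply Continuous.add hbv.neg
    exact Real.continuous_sqrt.comp (by continuity)
  have hT : ContinuousOn (Tf m) {p | 0 < av p} := by
    unfold Tf
    exact ContinuousOn.div hnum.continuousOn hav.continuousOn (fun p hp => ne_of_gt hp)
  unfold Gf
  apply continuousOn_pi.2
  intro i
  exact continuousOn_const.add (hT.mul (continuous_apply i).continuousOn)

lemma x1s_sq (hm : (m 1)^2 + (m 2)^2 + (m 3)^2 < (m 0)^2) :
    (x1s m)^2 = (m 0)^2 - (m 2)^2 - (m 3)^2 := by
  apply Real.sq_sqrt
  nlinarith [sq_nonneg (m 1)]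

lemma x1s_gt (hm : (m 1)^2 + (m 2)^2 + (m 3)^2 < (m 0)^2) :
    |m 1| < x1s m := by
  have h1 := x1s_sq hm
  have h0 : 0 ≤ x1s m := Real.sqrt_nonneg _
  nlinarith [abs_nonneg (m 1), sq_abs (m 1)]

lemma rstar_mem (hL1 : 0 < L1) (hL01 : L1 < L0) (hl2 : 0 < l2) (hl3 : 0 < l3)
    (hm0 : 0 < m 0) (hm : (m 1)^2 + (m 2)^2 + (m 3)^2 < (m 0)^2)
    (hε : ε = 1 ∨ ε = -1) :
    rstar ε m ∈ Bset L0 L1 l2 l3 ε m := by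
  have hee : ε * ε = 1 := by rcases hε with h | h <;> rw [h] <;> norm_num
  have hsq := x1s_sq hm
  have hgt := x1s_gt hm
  have h0 : rstar ε m 0 = m 0 := by simp [rstar]
  have h1 : rstar ε m 1 = ε * x1s m := by simp [rstar]
  have h2 : rstar ε m 2 = m 2 := by simp [rstar]
  have h3 : rstar ε m 3 = m 3 := by simp [rstar]
  have hsgn : 0 < ε * (ε * x1s m - m 1) := by
    have he1 : ε * (ε * x1s m - m 1) = x1s m - ε * m 1 := by
      rcases hε with rfl | rfl <;> ring
    rw [he1]
    have he2 : ε * m 1 ≤ |m 1| := by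
      rcases hε with rfl | rfl
      · simpa using le_abs_self (m 1)
      · simpa using neg_le_abs (m 1)
    linarith
  refine ⟨by rw [h0]; exact hm0, ?_, ?_, ?_⟩
  · rw [h0, h1, h2, h3]
    have he3 : (ε * x1s m)^2 = (x1s m)^2 := by rcases hε with rfl | rfl <;> ring
    rw [he3]; linarith
  · have hsub1 : (rstar ε m - m) 1 = ε * x1s m - m 1 := by simp [Pi.sub_apply, h1]
    have hsub0 : (rstar ε m - m) 0 = 0 := by simp [Pi.sub_apply, h0]
    have hsub2 : (rstar ε m - m) 2 = 0 := by simp [Pi.sub_apply, h2]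
    have hsub3 : (rstar ε m - m) 3 = 0 := by simp [Pi.sub_apply, h3]
    unfold qf
    rw [hsub0, hsub1, hsub2, hsub3]
    have hne : ε * x1s m - m 1 ≠ 0 := by
      intro hcon
      have : ε * (ε * x1s m - m 1) = 0 := by rw [hcon]; ring
      linarith [hsgn]
    have : 0 < (ε * x1s m - m 1)^2 := by positivity
    nlinarith [this]
  · rw [h1]
    exact hsgn

lemma contractible_Bset (hL1 : 0 < L1) (hL01 : L1 < L0) (hl2 : 0 < l2) (hl3 : 0 < l3)
    (hm0 : 0 < m 0) (hm : (m 1)^2 + (m 2)^2 + (m 3)^2 < (m 0)^2)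
    (hε : ε = 1 ∨ ε = -1) :
    ContractibleSpace ↥(Bset L0 L1 l2 l3 ε m) := by
  rw [contractible_iff_id_nullhomotopic]
  have hr : rstar ε m ∈ Bset L0 L1 l2 l3 ε m := rstar_mem hL1 hL01 hl2 hl3 hm0 hm hε
  refine ⟨⟨rstar ε m, hr⟩, ?_⟩
  -- combination map
  set r := rstar ε m with hrdef
  have hmemC : ∀ (t : ℝ), 0 ≤ t → t ≤ 1 → ∀ y : ↥(Bset L0 L1 l2 l3 ε m),
      (fun i => (1 - t) * ((y : Fin 4 → ℝ) i - m i) + t * (r i - m i))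
        ∈ Cset L0 L1 l2 l3 ε := by
    intro t ht0 ht1 y
    have h1 : (y : Fin 4 → ℝ) - m ∈ Cset L0 L1 l2 l3 ε := sub_mem_Cset y.2
    have h2 : r - m ∈ Cset L0 L1 l2 l3 ε := sub_mem_Cset hr
    have := Cset_convex hL1 hL01 hl2 hl3 hε h1 h2 ht0 ht1
    simpa [Pi.sub_apply] using this
  have havC : ∀ p ∈ Cset L0 L1 l2 l3 ε, 0 < av p := fun p hp =>
    av_pos hL1 hL01 hl2 hl3 hp.1
  constructor
  refine ⟨⟨fun q => ⟨Gf m (fun i => (1 - (q.1 : ℝ)) * ((q.2 : Fin 4 → ℝ) i - m i)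
    + (q.1 : ℝ) * (r i - m i)),
    Gf_mem hL1 hL01 hl2 hl3 hm0 hm (hmemC _ q.1.2.1 q.1.2.2 q.2)⟩, ?_⟩, ?_, ?_⟩
  · -- continuity
    apply Continuous.subtype_mk
    have hcomb : Continuous fun q : ↥unitInterval × ↥(Bset L0 L1 l2 l3 ε m) =>
        (fun i => (1 - (q.1 : ℝ)) * ((q.2 : Fin 4 → ℝ) i - m i)
          + (q.1 : ℝ) * (r i - m i)) := by
      apply continuous_pi
      intro i
      have ht : Continuous fun q : ↥unitInterval × ↥(Bset L0 L1 l2 l3 ε m) => (q.1 : ℝ) :=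
        continuous_subtype_val.comp continuous_fst
      have hy : Continuous fun q : ↥unitInterval × ↥(Bset L0 L1 l2 l3 ε m) =>
          (q.2 : Fin 4 → ℝ) i :=
        (continuous_apply i).comp (continuous_subtype_val.comp continuous_snd)
      exact ((continuous_const.sub ht).mul (hy.sub continuous_const)).add
        (ht.mul continuous_const)
    exact continuousOn_Gf.comp_continuous hcomb
      (fun q => havC _ (hmemC _ q.1.2.1 q.1.2.2 q.2))
  · -- at t = 0
    intro y
    apply Subtype.ext
    show Gf m _ = (y : Fin 4 → ℝ)
    have hfun : (fun i => (1 - ((0 : ↥unitInterval) : ℝ)) * ((y : Fin 4 → ℝ) i - m i)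
        + ((0 : ↥unitInterval) : ℝ) * (r i - m i)) = (y : Fin 4 → ℝ) - m := by
      funext i
      simp [Pi.sub_apply]
    rw [hfun]
    exact Gf_sub_eq hm hL1 hL01 hl2 hl3 y.2
  · -- at t = 1
    intro y
    apply Subtype.ext
    show Gf m _ = r
    have hfun : (fun i => (1 - ((1 : ↥unitInterval) : ℝ)) * ((y : Fin 4 → ℝ) i - m i)
        + ((1 : ↥unitInterval) : ℝ) * (r i - m i)) = r - m := by
      funext i
      simp [Pi.sub_apply]
    rw [hfun]
    exact Gf_sub_eq hm hL1 hL01 hl2 hl3 hr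

/-- transfer homeomorphism between nested subtypes -/
def restrictHomeo {X : Type*} [TopologicalSpace X] (s t : Set X) (h : t ⊆ s) :
    ((Subtype.val : s → X) ⁻¹' t) ≃ₜ t where
  toFun a := ⟨a.1.1, a.2⟩
  invFun b := ⟨⟨b.1, h b.2⟩, b.2⟩
  left_inv a := rfl
  right_inv b := rfl
  continuous_toFun :=
    Continuous.subtype_mk (continuous_subtype_val.comp continuous_subtype_val) _
  continuous_invFun :=
    Continuous.subtype_mk (Continuous.subtype_mk continuous_subtype_val _) _

end lemmas

end

end Stmt16Aux

/-- The bottom of the valley of the 2HDM Higgs potential, in the case of exactly one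
positive spacelike eigenvalue (`Λ₁ > 0`, `Λ₂, Λ₃ < 0`), has exactly two connected
components, each of which is simply connected. -/
theorem stmt_16 (Λ : Fin 4 → ℝ)
    (h1 : 0 < Λ 1) (h1' : Λ 1 < Λ 0) (h2 : Λ 2 < 0) (h3 : Λ 3 < 0)
    (Q : (Fin 4 → ℝ) → ℝ)
    (hQ : ∀ p, Q p = Λ 0 * (p 0) ^ 2 - Λ 1 * (p 1) ^ 2 - Λ 2 * (p 2) ^ 2 - Λ 3 * (p 3) ^ 2)
    (m : Fin 4 → ℝ)
    (hm0 : 0 < m 0) (hmin : (m 1) ^ 2 + (m 2) ^ 2 + (m 3) ^ 2 < (m 0) ^ 2)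
    (B : Set (Fin 4 → ℝ))
    (hB : B = {r | 0 < r 0 ∧ (r 0) ^ 2 = (r 1) ^ 2 + (r 2) ^ 2 + (r 3) ^ 2 ∧
      Q (r - m) < 0}) :
    Nat.card (ConnectedComponents B) = 2 ∧
      ∀ x : B, SimplyConnectedSpace (connectedComponent x) := by
  classical
  have hl2 : 0 < -Λ 2 := by linarith
  have hl3 : 0 < -Λ 3 := by linarith
  set l2 : ℝ := -Λ 2 with hl2def
  set l3 : ℝ := -Λ 3 with hl3def
  -- characterization of membership in B
  have hchar : ∀ r : Fin 4 → ℝ, r ∈ B ↔ (0 < r 0 ∧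
      (r 0)^2 = (r 1)^2 + (r 2)^2 + (r 3)^2 ∧
      0 < Stmt16Aux.qf (Λ 0) (Λ 1) l2 l3 (r - m)) := by
    intro r
    rw [hB]
    simp only [Set.mem_setOf_eq]
    constructor
    · rintro ⟨ha, hb, hc⟩
      refine ⟨ha, hb, ?_⟩
      rw [hQ] at hc
      unfold Stmt16Aux.qf
      rw [hl2def, hl3def]
      linarith
    · rintro ⟨ha, hb, hc⟩
      refine ⟨ha, hb, ?_⟩
      rw [hQ]
      unfold Stmt16Aux.qf at hc
      rw [hl2def, hl3def] at hc
      linarith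
  -- the two pieces
  have hBsub : ∀ ε : ℝ, Stmt16Aux.Bset (Λ 0) (Λ 1) l2 l3 ε m ⊆ B := by
    intro ε y hy
    exact (hchar y).2 ⟨hy.1, hy.2.1, hy.2.2.1⟩
  have hmem_iff : ∀ (ε : ℝ) (y : ↥B),
      y ∈ (Subtype.val ⁻¹' Stmt16Aux.Bset (Λ 0) (Λ 1) l2 l3 ε m : Set ↥B)
        ↔ 0 < ε * (y.1 1 - m 1) := by
    intro ε y
    constructor
    · intro hy; exact hy.2.2.2
    · intro hy
      have := (hchar y.1).1 y.2
      exact ⟨this.1, this.2.1, this.2.2, hy⟩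
  have hne : ∀ y : ↥B, y.1 1 - m 1 ≠ 0 := by
    intro y hy0
    have hq := ((hchar y.1).1 y.2).2.2
    unfold Stmt16Aux.qf at hq
    have h1' : (y.1 - m) 1 = y.1 1 - m 1 := rfl
    rw [h1', hy0] at hq
    have h2' : (0:ℝ) ≤ l2 * ((y.1 - m) 2)^2 := mul_nonneg hl2.le (sq_nonneg _)
    have h3' : (0:ℝ) ≤ l3 * ((y.1 - m) 3)^2 := mul_nonneg hl3.le (sq_nonneg _)
    nlinarith [h2', h3', mul_nonneg (by linarith : (0:ℝ) ≤ Λ 0) (sq_nonneg ((y.1 - m) 0))]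
  -- contractibility of the pieces
  have hcontr : ∀ ε : ℝ, (ε = 1 ∨ ε = -1) →
      ContractibleSpace ↥(Stmt16Aux.Bset (Λ 0) (Λ 1) l2 l3 ε m) := by
    intro ε hε
    exact Stmt16Aux.contractible_Bset h1 h1' hl2 hl3 hm0 hmin hε
  have hpreB : ∀ ε : ℝ, (ε = 1 ∨ ε = -1) →
      IsPreconnected (Stmt16Aux.Bset (Λ 0) (Λ 1) l2 l3 ε m) := by
    intro ε hε
    haveI := hcontr ε hε
    exact isPreconnected_iff_preconnectedSpace.2 inferInstance
  have hpre : ∀ ε : ℝ, (ε = 1 ∨ ε = -1) →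
      IsPreconnected (Subtype.val ⁻¹' Stmt16Aux.Bset (Λ 0) (Λ 1) l2 l3 ε m : Set ↥B) := by
    intro ε hε
    apply Topology.IsInducing.subtypeVal.isPreconnected_image.1
    rw [Subtype.image_preimage_coe, Set.inter_eq_self_of_subset_right (hBsub ε)]
    exact hpreB ε hε
  -- sign sets are open
  have hopen_sign : ∀ ε : ℝ, IsOpen {v : Fin 4 → ℝ | 0 < ε * (v 1 - m 1)} :=
    fun ε => isOpen_lt continuous_const (continuous_const.mul
      ((continuous_apply 1).sub continuous_const))
  have hF_eq : ∀ (ε : ℝ) (hε : ε = 1 ∨ ε = -1),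
      (Subtype.val ⁻¹' Stmt16Aux.Bset (Λ 0) (Λ 1) l2 l3 ε m : Set ↥B)
        = Subtype.val ⁻¹' {v : Fin 4 → ℝ | 0 < ε * (v 1 - m 1)} := by
    intro ε hε
    ext y
    constructor
    · intro hy; exact (hmem_iff ε y).1 hy
    · intro hy; exact (hmem_iff ε y).2 hy
  have hF_open : ∀ (ε : ℝ) (hε : ε = 1 ∨ ε = -1),
      IsOpen (Subtype.val ⁻¹' Stmt16Aux.Bset (Λ 0) (Λ 1) l2 l3 ε m : Set ↥B) := by
    intro ε hε
    rw [hF_eq ε hε]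
    exact (hopen_sign ε).preimage continuous_subtype_val
  have hcompl : ∀ y : ↥B, ¬ (0 < y.1 1 - m 1) ↔ 0 < (-1 : ℝ) * (y.1 1 - m 1) := by
    intro y
    constructor
    · intro h
      have := hne y
      rcases lt_trichotomy (y.1 1 - m 1) 0 with h' | h' | h'
      · linarith
      · exact absurd h' this
      · exact absurd h' h
    · intro h h'
      linarith
  -- the Bool-valued invariant
  set φ : ↥B → Bool := fun y => decide (0 < y.1 1 - m 1) with hφdef
  have hφtrue : ∀ y : ↥B, φ y = true ↔
      y ∈ (Subtype.val ⁻¹' Stmt16Aux.Bset (Λ 0) (Λ 1) l2 l3 1 m : Set ↥B) := by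
    intro y
    rw [hφdef, decide_eq_true_eq, hmem_iff]
    simp
  have hφfalse : ∀ y : ↥B, φ y = false ↔
      y ∈ (Subtype.val ⁻¹' Stmt16Aux.Bset (Λ 0) (Λ 1) l2 l3 (-1) m : Set ↥B) := by
    intro y
    rw [hφdef, decide_eq_false_iff_not, hmem_iff]
    exact hcompl y
  have hφcont : Continuous φ := by
    rw [continuous_discrete_rng]
    intro b
    cases b
    · have : φ ⁻¹' {false} = (Subtype.val ⁻¹' Stmt16Aux.Bset (Λ 0) (Λ 1) l2 l3 (-1) m : Set ↥B) := by
        ext y; rw [Set.mem_preimage, Set.mem_singleton_iff]; exact hφfalse y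
      rw [this]
      exact hF_open (-1) (Or.inr rfl)
    · have : φ ⁻¹' {true} = (Subtype.val ⁻¹' Stmt16Aux.Bset (Λ 0) (Λ 1) l2 l3 1 m : Set ↥B) := by
        ext y; rw [Set.mem_preimage, Set.mem_singleton_iff]; exact hφtrue y
      rw [this]
      exact hF_open 1 (Or.inl rfl)
  -- base points
  have hrp : Stmt16Aux.rstar 1 m ∈ Stmt16Aux.Bset (Λ 0) (Λ 1) l2 l3 1 m :=
    Stmt16Aux.rstar_mem h1 h1' hl2 hl3 hm0 hmin (Or.inl rfl)
  have hrm : Stmt16Aux.rstar (-1) m ∈ Stmt16Aux.Bset (Λ 0) (Λ 1) l2 l3 (-1) m :=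
    Stmt16Aux.rstar_mem h1 h1' hl2 hl3 hm0 hmin (Or.inr rfl)
  set xp : ↥B := ⟨Stmt16Aux.rstar 1 m, hBsub 1 hrp⟩ with hxp
  set xm : ↥B := ⟨Stmt16Aux.rstar (-1) m, hBsub (-1) hrm⟩ with hxm
  -- the equivalence with Bool
  have hinj : Function.Injective hφcont.connectedComponentsLift := by
    intro a b hab
    obtain ⟨x, rfl⟩ := ConnectedComponents.surjective_coe a
    obtain ⟨y, rfl⟩ := ConnectedComponents.surjective_coe b
    rw [Continuous.connectedComponentsLift_apply_coe,
      Continuous.connectedComponentsLift_apply_coe] at hab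
    rw [ConnectedComponents.coe_eq_coe']
    cases hy : φ y
    · have hx : φ x = false := by rw [hab, hy]
      exact (hpre (-1) (Or.inr rfl)).subset_connectedComponent
        ((hφfalse y).1 hy) ((hφfalse x).1 hx)
    · have hx : φ x = true := by rw [hab, hy]
      exact (hpre 1 (Or.inl rfl)).subset_connectedComponent
        ((hφtrue y).1 hy) ((hφtrue x).1 hx)
  have hsurj : Function.Surjective hφcont.connectedComponentsLift := by
    intro b
    cases b
    · refine ⟨ConnectedComponents.mk xm, ?_⟩
      rw [Continuous.connectedComponentsLift_apply_coe]
      exact (hφfalse xm).2 ((hmem_iff (-1) xm).2 hrm.2.2.2)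
    · refine ⟨ConnectedComponents.mk xp, ?_⟩
      rw [Continuous.connectedComponentsLift_apply_coe]
      exact (hφtrue xp).2 ((hmem_iff 1 xp).2 hrp.2.2.2)
  have hcard : Nat.card (ConnectedComponents ↥B) = 2 := by
    rw [Nat.card_congr (Equiv.ofBijective _ ⟨hinj, hsurj⟩)]
    simp [Nat.card_eq_fintype_card]
  refine ⟨hcard, ?_⟩
  -- simple connectivity of components
  intro x
  have hd := hne x
  have hcase : (0 < (1:ℝ) * (x.1 1 - m 1)) ∨ (0 < (-1:ℝ) * (x.1 1 - m 1)) := by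
    rcases lt_trichotomy (x.1 1 - m 1) 0 with h | h | h
    · right; linarith
    · exact absurd h hd
    · left; linarith
  have main : ∀ ε : ℝ, (ε = 1 ∨ ε = -1) → 0 < ε * (x.1 1 - m 1) →
      SimplyConnectedSpace ↥(connectedComponent x) := by
    intro ε hε hx
    set F : Set ↥B := Subtype.val ⁻¹' Stmt16Aux.Bset (Λ 0) (Λ 1) l2 l3 ε m with hFdef
    have hxF : x ∈ F := (hmem_iff ε x).2 hx
    have hFopen : IsOpen F := hF_open ε hε
    have hFcompl : Fᶜ = Subtype.val ⁻¹' Stmt16Aux.Bset (Λ 0) (Λ 1) l2 l3 (-ε) m := by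
      ext y
      rw [Set.mem_compl_iff, hFdef]
      rw [Set.mem_preimage, Set.mem_preimage]
      constructor
      · intro hy
        apply (hmem_iff (-ε) y).2
        have hy' : ¬ (0 < ε * (y.1 1 - m 1)) := fun hc => hy ((hmem_iff ε y).2 hc)
        rcases lt_trichotomy (y.1 1 - m 1) 0 with h | h | h
        · rcases hε with rfl | rfl
          · nlinarith
          · exfalso; apply hy'; nlinarith
        · exact absurd h (hne y)
        · rcases hε with rfl | rfl
          · exfalso; apply hy'; nlinarith
          · nlinarith
      · intro hy hy'
        have h1'' := ((hmem_iff ε y).1 hy')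
        have h2'' := ((hmem_iff (-ε) y).1 hy)
        nlinarith
    have hεneg : (-ε = 1 ∨ -ε = -1) := by
      rcases hε with rfl | rfl
      · right; norm_num
      · left; norm_num
    have hFclosed : IsClosed F := by
      rw [← isOpen_compl_iff, hFcompl]
      exact hF_open (-ε) hεneg
    have hclopen : IsClopen F := ⟨hFclosed, hFopen⟩
    have hcomp : connectedComponent x = F :=
      subset_antisymm (hclopen.connectedComponent_subset hxF)
        ((hpre ε hε).subset_connectedComponent hxF)
    rw [hcomp]
    haveI := hcontr ε hε
    haveI : ContractibleSpace ↥F :=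
      (Stmt16Aux.restrictHomeo B (Stmt16Aux.Bset (Λ 0) (Λ 1) l2 l3 ε m)
        (hBsub ε)).contractibleSpace
    infer_instance
  rcases hcase with h | h
  · exact main 1 (Or.inl rfl) h
  · exact main (-1) (Or.inr rfl) h
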